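/- Let G be a finite simple identifiable graph of girth at least 5 containing an induced subgraph P isomorphic to P11 (with x denoting the unique vertex of P of degree 2 in P, i.e. the subdivision vertex), such that every vertex of P other than x has all of its G-neighbours inside P. Then every identifying code C of G satisfies |C ∩ V(P)| ≥ 4. -/

import Mathlib

/-- A graph is *identifiable* if no two distinct vertices have the same closed
neighbourhood. -/
def SimpleGraph.Identifiable {V : Type*} (G : SimpleGraph V) : Prop :=
  ∀ u v : V, insert u (G.neighborSet u) = insert v (G.neighborSet v) → u = v

/-- A set of vertices is *dominating* if every vertex is equal or adjacent to a
member of the set. -/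
def SimpleGraph.DominatingSet {V : Type*} (G : SimpleGraph V) (D : Set V) : Prop :=
  ∀ v : V, ∃ d ∈ D, d = v ∨ G.Adj d v

/-- A set `C` is an *identifying code* if it is dominating and every two distinct
vertices have different closed neighbourhoods within `C`. -/
def SimpleGraph.IdentifyingCode {V : Type*} (G : SimpleGraph V) (C : Set V) : Prop :=
  G.DominatingSet C ∧
    ∀ u v : V, u ≠ v →
      insert u (G.neighborSet u) ∩ C ≠ insert v (G.neighborSet v) ∩ C

/-- The identifying code number: the minimum size of an identifying code. -/
noncomputable def SimpleGraph.gammaID {V : Type*} (G : SimpleGraph V) : ℕ :=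
  sInf {k : ℕ | ∃ C : Set V, G.IdentifyingCode C ∧ C.ncard = k}

/-- The graph `P11`: the Petersen graph (outer vertices `0,…,4`, inner vertices
`5,…,9`, spokes `i — i+5`) with the outer edge `{0,1}` subdivided once by the new
vertex `10`, which is the unique vertex of degree 2. -/
def P11 : SimpleGraph (Fin 11) :=
  SimpleGraph.fromRel (fun a b =>
    (a, b) ∈ ([(0, 10), (1, 10), (1, 2), (2, 3), (3, 4), (4, 0),
               (5, 7), (6, 8), (7, 9), (8, 5), (9, 6),
               (0, 5), (1, 6), (2, 7), (3, 8), (4, 9)] : List (Fin 11 × Fin 11)))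

/-- Lemma: if an identifiable graph of girth at least 5 contains an induced copy of
`P11` whose vertices other than the subdivision vertex `x` have all their
neighbours inside the copy, then any identifying code contains at least 4 vertices
of the copy. -/
theorem identifyingCode_inter_P11_ge_four
    {V : Type*} [Fintype V] (G : SimpleGraph V) (hid : G.Identifiable)
    (hg : 5 ≤ G.egirth)
    (P : Set V) (x : V) (hx : x ∈ P)
    (φ : G.induce P ≃g P11) (hφx : φ ⟨x, hx⟩ = (10 : Fin 11))
    (hclosed : ∀ v ∈ P, v ≠ x → ∀ w : V, G.Adj v w → w ∈ P)
    (C : Set V) (hC : G.IdentifyingCode C) :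
    4 ≤ (C ∩ P).ncard := by
  classical
  by_contra hlt
  push_neg at hlt
  -- `S` is the finset of code vertices inside `P`.
  set S : Finset V := (C ∩ P).toFinset with hS
  have hScard : S.card ≤ 3 := by
    have h1 : (C ∩ P).ncard = S.card := Set.ncard_eq_toFinset_card' _
    omega
  -- `Q` is the finset of the 10 vertices of `P` other than `x`.
  set Q : Finset V := (P \ {x}).toFinset with hQ
  have hPcard : P.ncard = 11 := by
    have h1 : Nat.card P = 11 := Nat.card_eq_of_equiv_fin φ.toEquiv
    rw [Nat.card_coe_set_eq] at h1
    exact h1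
  have hQcard : Q.card = 10 := by
    have h1 : (P \ {x}).ncard = Q.card := Set.ncard_eq_toFinset_card' _
    have h2 : (P \ {x}).ncard = P.ncard - 1 :=
      Set.ncard_diff_singleton_of_mem hx
    omega
  -- the signature map
  set f : V → Finset V := fun v => (insert v (G.neighborSet v) ∩ C).toFinset with hf
  have hmap : ∀ v ∈ Q, f v ∈ S.powerset.erase ∅ := by
    intro v hv
    rw [hQ, Set.mem_toFinset, Set.mem_diff, Set.mem_singleton_iff] at hv
    obtain ⟨hvP, hvx⟩ := hv
    rw [Finset.mem_erase, Finset.mem_powerset]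
    constructor
    · -- nonempty by domination
      obtain ⟨d, hdC, hd⟩ := hC.1 v
      have hdmem : d ∈ insert v (G.neighborSet v) ∩ C := by
        refine ⟨?_, hdC⟩
        rcases hd with h | h
        · exact h ▸ Set.mem_insert _ _
        · exact Set.mem_insert_of_mem _ h.symm
      intro hempty
      have : d ∈ f v := by rw [hf]; simpa using hdmem
      rw [hempty] at this
      exact absurd this (Finset.notMem_empty d)
    · -- subset of S
      intro w hw
      rw [hf, Set.mem_toFinset] at hw
      obtain ⟨hw1, hw2⟩ := hw
      rw [hS, Set.mem_toFinset]
      refine ⟨hw2, ?_⟩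
      rcases hw1 with h | h
      · exact h ▸ hvP
      · exact hclosed v hvP hvx w h
  have hinj : Set.InjOn f Q := by
    intro u hu v hv huv
    by_contra hne
    apply hC.2 u v hne
    have := Set.toFinset_inj.mp huv
    exact this
  have hle : Q.card ≤ (S.powerset.erase ∅).card :=
    Finset.card_le_card_of_injOn f hmap hinj
  have hpow : (S.powerset.erase ∅).card = 2 ^ S.card - 1 := by
    rw [Finset.card_erase_of_mem (Finset.empty_mem_powerset S), Finset.card_powerset]
  have h2 : 2 ^ S.card ≤ 2 ^ 3 := Nat.pow_le_pow_right (by norm_num) hScard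
  omega
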